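/- Let O be the real algebra with basis {e^x : x ∈ F_8} and multiplication e^x e^y = (-1)^{tr(y x^6)} e^{x+y}. For a subset X ⊆ F_8 with |X| = 4 let a = (1/2)Σ_{x∈X} e^x. Then a^2 = a − 1 if 0 ∈ X, and a^2 = −1 if 0 ∉ X. -/
import Mathlib

open scoped Classical
noncomputable section

abbrev F8 := GaloisField 2 3

instance : Fintype F8 := Fintype.ofFinite F8

def tr (x : F8) : F8 := x + x ^ 2 + x ^ 4

/-- The sign `(-1)^{φ(x,y)}` where `φ(x,y) = tr(y x⁶)`. -/
def sgn (x y : F8) : ℝ := if tr (y * x ^ 6) = 0 then 1 else -1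

/-- Multiplication of the twisted group algebra `ℝ_σ[F₈]`, on coordinates:
octonions are functions `F8 → ℝ`, and `e^x e^y = (-1)^{tr(y x⁶)} e^{x+y}`. -/
def omul (a b : F8 → ℝ) : F8 → ℝ := fun z => ∑ x : F8, sgn x (z + x) * a x * b (z + x)

/-- The basis element `e^x`. -/
def e (x : F8) : F8 → ℝ := fun w => if w = x then 1 else 0

/-- Octonion conjugation: `a* = Re(a) - Im(a)`. -/
def conj (a : F8 → ℝ) : F8 → ℝ := fun w => if w = 0 then a 0 else - a w

/-- The norm `N(a) = Σ aₓ²`. -/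
def N (a : F8 → ℝ) : ℝ := ∑ x : F8, (a x) ^ 2

-- auxiliary lemmas

lemma card_F8 : Fintype.card F8 = 8 := by
  have h := GaloisField.card 2 3 (by norm_num)
  rwa [Nat.card_eq_fintype_card] at h

lemma pow8 (x : F8) : x ^ 8 = x := by
  have := FiniteField.pow_card x
  rwa [card_F8] at this

lemma pow7 {x : F8} (hx : x ≠ 0) : x ^ 7 = 1 := by
  have := FiniteField.pow_card_sub_one_eq_one x hx
  rwa [card_F8] at this

lemma tr_sq (x : F8) : tr x ^ 2 = tr x := by
  have hf : ∀ a b : F8, (a + b) ^ 2 = a ^ 2 + b ^ 2 := by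
    intro a b
    have := map_add (frobenius F8 2) a b
    simpa [frobenius_def] using this
  have : tr x ^ 2 = x ^ 2 + x ^ 4 + x ^ 8 := by
    rw [tr, hf, hf]; ring
  rw [this, pow8, tr]; ring

lemma tr_zero_or_one (x : F8) : tr x = 0 ∨ tr x = 1 := by
  have h := tr_sq x
  have : tr x * (tr x - 1) = 0 := by rw [mul_sub, ← sq, h]; ring
  rcases mul_eq_zero.mp this with h' | h'
  · exact Or.inl h'
  · exact Or.inr (by linear_combination h')

lemma tr_zero : tr (0 : F8) = 0 := by simp [tr]

lemma tr_one : tr (1 : F8) = 1 := by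
  have h2 : (1 : F8) + 1 = 0 := CharTwo.add_self_eq_zero 1
  simp [tr]
  linear_combination h2

lemma tr_add_tr_inv {u : F8} (h0 : u ≠ 0) (h1 : u ≠ 1) : tr u + tr u⁻¹ = 1 := by
  have h7 : u ^ 7 = 1 := pow7 h0
  have hinv : u⁻¹ = u ^ 6 := by
    refine inv_eq_of_mul_eq_one_right ?_
    calc u * u ^ 6 = u ^ 7 := by ring
    _ = 1 := h7
  have hs : u ^ 6 + u ^ 5 + u ^ 4 + u ^ 3 + u ^ 2 + u + 1 = 0 := by
    have hfac : (u - 1) * (u ^ 6 + u ^ 5 + u ^ 4 + u ^ 3 + u ^ 2 + u + 1) = u ^ 7 - 1 := by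
      ring
    have : (u - 1) * (u ^ 6 + u ^ 5 + u ^ 4 + u ^ 3 + u ^ 2 + u + 1) = 0 := by
      rw [hfac, h7]; ring
    rcases mul_eq_zero.mp this with h | h
    · exact absurd (by linear_combination h) h1
    · exact h
  have h12 : u ^ 12 = u ^ 5 := by
    calc u ^ 12 = u ^ 5 * u ^ 7 := by ring
    _ = u ^ 5 := by rw [h7, mul_one]
  have h24 : u ^ 24 = u ^ 3 := by
    calc u ^ 24 = u ^ 3 * (u ^ 7) ^ 3 := by ring
    _ = u ^ 3 := by rw [h7]; ring
  have : tr u + tr u⁻¹ = u + u ^ 2 + u ^ 4 + u ^ 6 + u ^ 12 + u ^ 24 := by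
    rw [tr, tr, hinv]; ring
  rw [this, h12, h24]
  have hneg : (-1 : F8) = 1 := CharTwo.neg_eq 1
  linear_combination hs + hneg

lemma sgn_zero_left (y : F8) : sgn 0 y = 1 := by
  simp [sgn, tr_zero]

lemma sgn_zero_right (x : F8) : sgn x 0 = 1 := by
  simp [sgn, tr_zero]

lemma sgn_self {x : F8} (hx : x ≠ 0) : sgn x x = -1 := by
  have h7 : x * x ^ 6 = 1 := by
    have := pow7 hx
    calc x * x ^ 6 = x ^ 7 := by ring
    _ = 1 := this
  rw [sgn, h7, tr_one, if_neg one_ne_zero]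

lemma sgn_antisymm {x y : F8} (hx : x ≠ 0) (hy : y ≠ 0) (hxy : x ≠ y) :
    sgn x y = - sgn y x := by
  set u : F8 := y * x ^ 6 with hu
  have h7x : x ^ 7 = 1 := pow7 hx
  have h7y : y ^ 7 = 1 := pow7 hy
  have hu0 : u ≠ 0 := by
    simp only [hu, mul_ne_zero_iff]
    exact ⟨hy, pow_ne_zero _ hx⟩
  have hu1 : u ≠ 1 := by
    intro h
    apply hxy
    have : x * u = x * 1 := by rw [h]
    have hx7 : x * u = y := by
      calc x * u = y * x ^ 7 := by rw [hu]; ring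
      _ = y := by rw [h7x, mul_one]
    rw [h, mul_one] at hx7
    exact hx7
  have hinv : u⁻¹ = x * y ^ 6 := by
    refine inv_eq_of_mul_eq_one_right ?_
    calc u * (x * y ^ 6) = x ^ 7 * y ^ 7 := by rw [hu]; ring
    _ = 1 := by rw [h7x, h7y, mul_one]
  have hsum : tr u + tr u⁻¹ = 1 := tr_add_tr_inv hu0 hu1
  rw [sgn, sgn, ← hu, ← hinv]
  rcases tr_zero_or_one u with h | h
  · have h' : tr u⁻¹ = 1 := by
      have := hsum; rw [h, zero_add] at this; exact this
    rw [if_pos h, if_neg (h' ▸ one_ne_zero), neg_neg]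
  · have h' : tr u⁻¹ = 0 := by
      have h1 := hsum; rw [h] at h1
      have h2 : (1 : F8) + tr u⁻¹ = 1 + 0 := by rw [add_zero]; exact h1
      exact add_left_cancel h2
    rw [if_neg (h ▸ one_ne_zero), if_pos h']

lemma add_cancel_left {z x : F8} (h : z + x = 0) : x = z := by
  have : x = -z := by linear_combination h
  rwa [CharTwo.neg_eq] at this

lemma omul_eval (X : Finset F8) (hX : X.card = 4) (z : F8) :
    omul (fun w => if w ∈ X then (1/2 : ℝ) else 0) (fun w => if w ∈ X then (1/2 : ℝ) else 0) z =
      if z = 0 then (if (0 : F8) ∈ X then -(1/2 : ℝ) else -1)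
      else if (0 : F8) ∈ X ∧ z ∈ X then (1/2 : ℝ) else 0 := by
  set A : F8 → ℝ := fun w => if w ∈ X then (1/2 : ℝ) else 0 with hA
  have hAsq : ∑ x : F8, A x * A x = 1 := by
    have h1 : ∀ x : F8, A x * A x = if x ∈ X then (1/4 : ℝ) else 0 := by
      intro x; by_cases h : x ∈ X <;> simp [hA, h] <;> norm_num
    rw [Finset.sum_congr rfl fun x _ => h1 x, Finset.sum_ite_mem, Finset.univ_inter,
      Finset.sum_const, hX]
    norm_num
  rw [omul]
  by_cases hz : z = 0
  · subst hz
    simp only [zero_add, if_pos rfl]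
    rw [← Finset.add_sum_erase Finset.univ _ (Finset.mem_univ (0 : F8))]
    have hres : ∑ x ∈ Finset.univ.erase (0 : F8), sgn x x * A x * A x
        = ∑ x ∈ Finset.univ.erase (0 : F8), -(A x * A x) := by
      refine Finset.sum_congr rfl fun x hx => ?_
      have hx0 : x ≠ 0 := (Finset.mem_erase.mp hx).1
      rw [sgn_self hx0]; ring
    rw [hres, Finset.sum_neg_distrib]
    have herase : ∑ x ∈ Finset.univ.erase (0 : F8), A x * A x
        = (∑ x : F8, A x * A x) - A 0 * A 0 :=
      Finset.sum_erase_eq_sub (Finset.mem_univ _)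
    rw [herase, hAsq, sgn_zero_left]
    by_cases h0 : (0 : F8) ∈ X <;> simp [hA, h0] <;> norm_num
  · rw [if_neg hz]
    rw [← Finset.add_sum_erase Finset.univ _ (Finset.mem_univ (0 : F8))]
    have hzmem : z ∈ Finset.univ.erase (0 : F8) :=
      Finset.mem_erase.mpr ⟨hz, Finset.mem_univ z⟩
    rw [← Finset.add_sum_erase _ _ hzmem]
    have hzz : z + z = 0 := CharTwo.add_self_eq_zero z
    have hrest : ∑ x ∈ (Finset.univ.erase (0 : F8)).erase z,
        sgn x (z + x) * A x * A (z + x) = 0 := by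
      refine Finset.sum_involution (fun x _ => z + x) ?_ ?_ ?_ ?_
      · intro x hx
        have hx' := Finset.mem_erase.mp hx
        have hxz : x ≠ z := hx'.1
        have hx0 : x ≠ 0 := (Finset.mem_erase.mp hx'.2).1
        have hzx0 : z + x ≠ 0 := fun h => hxz (add_cancel_left h)
        have hxne : x ≠ z + x := by
          intro h
          apply hz
          have : z + x = 0 + x := by rw [← h, zero_add]
          exact add_right_cancel this
        have hback : z + (z + x) = x := by rw [← add_assoc, hzz, zero_add]
        rw [hback, sgn_antisymm hx0 hzx0 hxne]
        ring
      · intro x hx _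
        intro h
        replace h : z + x = x := h
        apply hz
        have : z + x = 0 + x := by rw [h, zero_add]
        exact add_right_cancel this
      · intro x hx
        have hx' := Finset.mem_erase.mp hx
        have hxz : x ≠ z := hx'.1
        have hx0 : x ≠ 0 := (Finset.mem_erase.mp hx'.2).1
        refine Finset.mem_erase.mpr ⟨?_, Finset.mem_erase.mpr ⟨?_, Finset.mem_univ _⟩⟩
        · intro h
          replace h : z + x = z := h
          apply hx0
          have : z + x = z + 0 := by rw [h, add_zero]
          exact add_left_cancel this
        · exact fun h => hxz (add_cancel_left (show z + x = 0 from h))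
      · intro x hx
        show z + (z + x) = x
        rw [← add_assoc, hzz, zero_add]
    rw [hrest, add_zero, add_zero, hzz, sgn_zero_left, sgn_zero_right]
    by_cases h0 : (0 : F8) ∈ X <;> by_cases hzX : z ∈ X <;>
      simp [hA, h0, hzX] <;> norm_num

theorem half_sum_sq (X : Finset F8) (hX : X.card = 4) :
    let a : F8 → ℝ := fun w => if w ∈ X then 1 / 2 else 0
    ((0 : F8) ∈ X → omul a a = a - e 0) ∧ ((0 : F8) ∉ X → omul a a = - e 0) := by
  intro a
  constructor
  · intro h0
    funext z
    have h := omul_eval X hX z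
    by_cases hz : z = 0
    · subst hz
      simp only [if_pos rfl, if_pos h0] at h
      show omul a a 0 = a 0 - e 0 0
      rw [h]
      simp [a, e, h0]
      norm_num
    · simp only [if_neg hz] at h
      show omul a a z = a z - e 0 z
      rw [h]
      by_cases hzX : z ∈ X <;> simp [a, e, hz, hzX, h0]
  · intro h0
    funext z
    have h := omul_eval X hX z
    by_cases hz : z = 0
    · subst hz
      simp only [if_pos rfl, if_neg h0] at h
      show omul a a 0 = -e 0 0
      rw [h]
      simp [e]
    · simp only [if_neg hz] at h
      show omul a a z = -e 0 z
      rw [h]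
      simp [e, hz, h0]
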